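/- Let m ≥ 1, n = 2m, and A = [[(m+1)I_m, J_m],[J_m, (m+1)I_m]] ∈ S^n, where I_m is the m×m identity and J_m the m×m all-ones matrix. Then ξ^{cp}_1(A) ≤ 2m(m+1)/(2m+1) < m+1. -/

import Mathlib

open Matrix MvPolynomial

noncomputable section CpAux

lemma psd_vmv {n : Type*} [Fintype n] (v : n → ℝ) : (vecMulVec v v).PosSemidef := by
  have h : (replicateRow Unit v)ᴴ = replicateCol Unit v := by ext i j; simp [conjTranspose_apply]
  rw [vecMulVec_eq Unit v v, ← h]
  exact posSemidef_conjTranspose_mul_self _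

lemma psd_smul {n : Type*} [Fintype n] {c : ℝ} (hc : 0 ≤ c) {M : Matrix n n ℝ}
    (hM : M.PosSemidef) : (c • M).PosSemidef := by
  refine ⟨?_, fun x => ?_⟩
  · show (c • M)ᴴ = c • M
    rw [conjTranspose_smul, star_trivial, hM.1]
  · exact (hM.smul hc).2 x

lemma psd_sum {n ι : Type*} [Fintype n] (s : Finset ι) (f : ι → Matrix n n ℝ)
    (h : ∀ i ∈ s, (f i).PosSemidef) : (∑ i ∈ s, f i).PosSemidef :=
  Finset.sum_induction f _ (fun _ _ ha hb => ha.add hb) .zero h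

def cpPt (m : ℕ) (γ : ℝ) (kl : Fin m × Fin m) : Fin m ⊕ Fin m → ℝ
  | .inl a => if a = kl.1 then γ else 0
  | .inr b => if b = kl.2 then γ else 0

def cpPt2 {m : ℕ} (β : ℝ) (i : Fin m ⊕ Fin m) : Fin m ⊕ Fin m → ℝ :=
  fun j => if j = i then β else 0

def cpL (m : ℕ) (γ β lam mu : ℝ) : MvPolynomial (Fin m ⊕ Fin m) ℝ →ₗ[ℝ] ℝ :=
  (∑ kl : Fin m × Fin m, lam • (aeval (cpPt m γ kl)).toLinearMap)
  + ∑ i : Fin m ⊕ Fin m, mu • (aeval (cpPt2 β i)).toLinearMap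

lemma cpL_apply (m : ℕ) (γ β lam mu : ℝ) (p : MvPolynomial (Fin m ⊕ Fin m) ℝ) :
    cpL m γ β lam mu p = (∑ kl : Fin m × Fin m, lam * aeval (cpPt m γ kl) p)
      + ∑ i : Fin m ⊕ Fin m, mu * aeval (cpPt2 β i) p := by
  simp [cpL]

lemma cpL_one (m : ℕ) (γ β lam mu : ℝ) :
    cpL m γ β lam mu 1 = (m : ℝ) ^ 2 * lam + 2 * m * mu := by
  simp [cpL_apply, Finset.sum_const, Fintype.card_prod]
  ring

lemma cpL_X (m : ℕ) (γ β lam mu : ℝ) (i : Fin m ⊕ Fin m) :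
    cpL m γ β lam mu (X i) = (m : ℝ) * lam * γ + mu * β := by
  rw [cpL_apply]
  simp only [aeval_X]
  congr 1
  · cases i with
    | inl a =>
      simp only [cpPt, Fintype.sum_prod_type]
      simp [Finset.sum_const, smul_ite, Finset.sum_ite_eq, Finset.mem_univ, nsmul_eq_mul]
      ring
    | inr b =>
      simp only [cpPt, Fintype.sum_prod_type]
      simp [Finset.sum_const, smul_ite, Finset.sum_ite_eq, Finset.mem_univ, nsmul_eq_mul]
      ring
  · simp [cpPt2, mul_ite, Finset.sum_ite_eq', Finset.mem_univ]

lemma cpL_XX (m : ℕ) (γ β lam mu : ℝ) (i j : Fin m ⊕ Fin m) :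
    cpL m γ β lam mu (X i * X j) =
      (match i, j with
       | .inl a, .inl a' => if a = a' then (m : ℝ) * (lam * γ^2) + mu * β^2 else 0
       | .inr b, .inr b' => if b = b' then (m : ℝ) * (lam * γ^2) + mu * β^2 else 0
       | _, _ => lam * γ^2) := by
  rw [cpL_apply]
  simp only [_root_.map_mul, aeval_X]
  rcases i with a | b <;> rcases j with a' | b' <;>
    simp only [cpPt, cpPt2, Fintype.sum_prod_type]
  · rcases eq_or_ne a a' with h | h <;>
      simp [h, ite_and, mul_ite, Finset.sum_const, Finset.sum_ite_eq, smul_ite,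
        Sum.inl.injEq] <;> ring_nf <;> tauto
  · simp [mul_ite, Finset.sum_ite_eq, smul_ite]
    ring_nf
    tauto
  · simp [mul_ite, Finset.sum_ite_eq, smul_ite]
    ring_nf
    tauto
  · rcases eq_or_ne b b' with h | h <;>
      simp [h, ite_and, mul_ite, Finset.sum_const, Finset.sum_ite_eq, smul_ite,
        Sum.inr.injEq] <;> ring_nf <;> tauto

end CpAux

/-- For `n = 2m` and `A = [[(m+1)Iₘ, Jₘ],[Jₘ, (m+1)Iₘ]]`, the level-1
dense moment bound for the cp-rank satisfies `ξ^cp_1(A) ≤ 2m(m+1)/(2m+1) < m+1`. -/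
theorem dense_cp_bound_small_on_bipartite_example
    (m : ℕ) (hm : 1 ≤ m)
    (A : Matrix (Fin m ⊕ Fin m) (Fin m ⊕ Fin m) ℝ)
    (hA : A = fromBlocks (((m : ℝ) + 1) • 1) (of fun _ _ => 1)
      (of fun _ _ => 1) (((m : ℝ) + 1) • 1)) :
    sInf {v : EReal | ∃ L : MvPolynomial (Fin m ⊕ Fin m) ℝ →ₗ[ℝ] ℝ,
        1 ≤ L 1 ∧
        (∀ i, Real.sqrt (A i i) ≤ L (X i)) ∧
        (∀ i j, L (X i * X j) = A i j) ∧
        Matrix.PosSemidef (Matrix.of (fun α β =>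
            match α, β with
            | none, none => L 1
            | none, some i => L (X i)
            | some i, none => L (X i)
            | some i, some j => L (X i * X j)) :
          Matrix (Option (Fin m ⊕ Fin m)) (Option (Fin m ⊕ Fin m)) ℝ) ∧
        v = ((L 1 : ℝ) : EReal)}
      ≤ ((2 * (m : ℝ) * ((m : ℝ) + 1) / (2 * (m : ℝ) + 1) : ℝ) : EReal) ∧
    2 * (m : ℝ) * ((m : ℝ) + 1) / (2 * (m : ℝ) + 1) < (m : ℝ) + 1 := by
  have hm1 : (1 : ℝ) ≤ (m : ℝ) := by exact_mod_cast hm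
  have hmpos : (0 : ℝ) < (m : ℝ) + 1 := by linarith
  have hc : (0 : ℝ) < 2 * (m : ℝ) + 1 := by linarith
  constructor
  · -- membership of the value, via the explicit functional
    set s : ℝ := Real.sqrt ((m : ℝ) + 1) with hs_def
    have hs2 : s ^ 2 = (m : ℝ) + 1 := Real.sq_sqrt hmpos.le
    have hs : 0 < s := Real.sqrt_pos.mpr hmpos
    set c : ℝ := 2 * (m : ℝ) + 1 with hc_def
    set γ : ℝ := c / (2 * s) with hγ_def
    set β : ℝ := c / s with hβ_def
    set lam : ℝ := 4 * ((m : ℝ) + 1) / c ^ 2 with hlam_def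
    set mu : ℝ := ((m : ℝ) + 1) / c ^ 2 with hmu_def
    have hlam0 : 0 ≤ lam := by positivity
    have hmu0 : 0 ≤ mu := by positivity
    have hlamγ : lam * γ ^ 2 = 1 := by
      rw [hlam_def, hγ_def]
      field_simp
      nlinarith [hs2]
    have hmuβ : mu * β ^ 2 = 1 := by
      rw [hmu_def, hβ_def]
      field_simp
      nlinarith [hs2]
    have hL1 : cpL m γ β lam mu 1 = 2 * (m : ℝ) * ((m : ℝ) + 1) / (2 * (m : ℝ) + 1) := by
      rw [cpL_one, hlam_def, hmu_def, ← hc_def]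
      field_simp
      ring
    have hLX : ∀ i, cpL m γ β lam mu (X i) = s := by
      intro i
      rw [cpL_X, hlam_def, hmu_def, hγ_def, hβ_def, hc_def, ← hs2]
      field_simp
      ring
    have hAd : ∀ i, A i i = (m : ℝ) + 1 := by
      intro i
      rcases i with a | b <;> simp [hA, fromBlocks, one_apply]
    have hAXX : ∀ i j, cpL m γ β lam mu (X i * X j) = A i j := by
      intro i j
      rw [cpL_XX]
      rcases i with a | a <;> rcases j with b | b <;>
        simp [hA, fromBlocks, one_apply, hlamγ, hmuβ, mul_ite, mul_one, mul_zero] <;>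
        rcases eq_or_ne a b with h | h <;> simp [h, hlamγ, hmuβ] <;> ring_nf
    refine sInf_le ⟨cpL m γ β lam mu, ?_, ?_, hAXX, ?_, by rw [hL1]⟩
    · rw [hL1]
      rw [le_div_iff₀ hc]
      nlinarith
    · intro i
      rw [hLX, hAd i, ← hs_def]
    · -- PSD part
      have hM : (Matrix.of (fun α β' =>
            match α, β' with
            | none, none => cpL m γ β lam mu 1
            | none, some i => cpL m γ β lam mu (X i)
            | some i, none => cpL m γ β lam mu (X i)
            | some i, some j => cpL m γ β lam mu (X i * X j)) :
          Matrix (Option (Fin m ⊕ Fin m)) (Option (Fin m ⊕ Fin m)) ℝ) =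
          (∑ kl : Fin m × Fin m, lam • vecMulVec (fun o => o.elim 1 (cpPt m γ kl))
              (fun o => o.elim 1 (cpPt m γ kl)))
          + ∑ i : Fin m ⊕ Fin m, mu • vecMulVec (fun o => o.elim 1 (cpPt2 β i))
              (fun o => o.elim 1 (cpPt2 β i)) := by
        ext α β'
        rcases α with _ | i <;> rcases β' with _ | j <;>
          simp [Matrix.add_apply, Matrix.sum_apply, Matrix.smul_apply, vecMulVec_apply,
            cpL_apply, _root_.map_one, aeval_X, _root_.map_mul] <;> ring_nf
      rw [hM]
      exact (psd_sum _ _ (fun kl _ => psd_smul hlam0 (psd_vmv _))).add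
        (psd_sum _ _ (fun i _ => psd_smul hmu0 (psd_vmv _)))
  · rw [div_lt_iff₀ hc]
    nlinarith
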